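/- Let p be an odd prime, q = p^r, and d ≥ 4 even with p ∤ d(d−1). For every integer m with 1 ≤ m ≤ q−2, m ≠ (q−1)/2, and every i with 0 ≤ i ≤ r−1, one has ⌊−2mp^i/(q−1)⌋ + ⌊mdp^i/(q−1)⌋ + ⌊−m(d−1)p^i/(q−1)⌋ − ⌊−mp^i/(q−1)⌋ + 1 = Σ_{h=1}^{d−2} ⌊⟨hp^i/(d−1)⟩ − mp^i/(q−1)⌋ + Σ_{h=1, h≠d/2}^{d−1} ⌊⟨−hp^i/d⟩ + mp^i/(q−1)⌋. -/

import Mathlib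

open Finset

/-- floor of a negative non-integer -/
lemma floor_neg_add (x : ℚ) (h : Int.fract x ≠ 0) : ⌊-x⌋ + ⌊x⌋ = -1 := by
  have h1 : Int.fract (-x) = 1 - Int.fract x := Int.fract_neg h
  have h2 : ((⌊-x⌋ + ⌊x⌋ : ℤ) : ℚ) = ((-1 : ℤ) : ℚ) := by
    have a := Int.floor_add_fract x
    have b := Int.floor_add_fract (-x)
    rw [h1] at b
    push_cast
    linarith
  exact_mod_cast h2

/-- Hermite identity -/
lemma hermite (x : ℚ) (n : ℕ) (hn : 0 < n) :
    ∑ k ∈ Finset.range n, ⌊x + (k : ℚ) / n⌋ = ⌊(n : ℚ) * x⌋ := by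
  have hn' : (0:ℚ) < n := by exact_mod_cast hn
  set f := Int.fract x with hf
  set j : ℤ := ⌊(n:ℚ) * f⌋ with hj
  have hf0 : 0 ≤ f := Int.fract_nonneg x
  have hf1 : f < 1 := Int.fract_lt_one x
  have hj0 : 0 ≤ j := Int.floor_nonneg.2 (by positivity)
  have hjle : (j:ℚ) ≤ n * f := Int.floor_le _
  have hjlt : (n:ℚ) * f < j + 1 := Int.lt_floor_add_one _
  have hjn : j < n := by
    have h2 : (n:ℚ) * f < n := by nlinarith
    have := lt_of_le_of_lt hjle h2
    exact_mod_cast this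
  have hterm : ∀ k ∈ Finset.range n, ⌊x + (k:ℚ)/n⌋
      = ⌊x⌋ + (if (n:ℤ) ≤ j + k then 1 else 0) := by
    intro k hk
    have hk' : (k:ℚ) < n := by exact_mod_cast Finset.mem_range.mp hk
    have hk0 : (0:ℚ) ≤ k := by positivity
    have hx : x + (k:ℚ)/n = (⌊x⌋ : ℚ) + (f + k/n) := by
      rw [hf, Int.fract]; ring
    rw [hx, Int.floor_intCast_add]
    congr 1
    split_ifs with hcase
    · have hcase' : (n:ℚ) ≤ (j:ℚ) + k := by exact_mod_cast hcase
      have hge : (1:ℚ) ≤ f + k/n := by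
        have e : f + (k:ℚ)/n = (n*f + k)/n := by field_simp
        rw [e, le_div_iff₀ hn']
        linarith
      have hlt : f + k/n < 2 := by
        have : (k:ℚ)/n < 1 := (div_lt_one hn').2 hk'
        linarith
      exact Int.floor_eq_iff.mpr ⟨by push_cast; linarith, by push_cast; linarith⟩
    · push_neg at hcase
      have hcase' : (j:ℚ) + k < n := by exact_mod_cast hcase
      have hlt : f + k/n < 1 := by
        have hexp : 1 - (f + k/n) = (n - n*f - k)/n := by field_simp; ring
        have : (0:ℚ) < (n - n*f - k) / n := by
          apply div_pos _ hn'
          have : (j:ℚ) + 1 + k ≤ n := by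
            have : (j:ℤ) + 1 + k ≤ n := by omega
            exact_mod_cast this
          linarith
        linarith
      have hge : (0:ℚ) ≤ f + k/n := by positivity
      exact Int.floor_eq_zero_iff.2 ⟨hge, hlt⟩
  rw [Finset.sum_congr rfl hterm, Finset.sum_add_distrib, Finset.sum_const]
  have hfil : (Finset.range n).filter (fun k : ℕ => (n:ℤ) ≤ j + (k:ℤ)) = Finset.Ico (n - j.toNat) n := by
    ext k
    simp only [Finset.mem_filter, Finset.mem_range, Finset.mem_Ico]
    omega
  have hcount : (∑ k ∈ Finset.range n, (if (n:ℤ) ≤ j + (k:ℤ) then (1:ℤ) else 0)) = j := by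
    rw [Finset.sum_boole, hfil, Nat.card_Ico]
    omega
  have hnx : ⌊(n : ℚ) * x⌋ = n * ⌊x⌋ + j := by
    have hx2 : (n:ℚ)*x = ((n*⌊x⌋ : ℤ):ℚ) + (n:ℚ)*f := by
      rw [hf, Int.fract]; push_cast; ring
    rw [hx2, Int.floor_intCast_add, ← hj]
  rw [hcount, hnx, nsmul_eq_mul, Finset.card_range]

lemma hermite_Icc (x : ℚ) (n : ℕ) (hn : 1 ≤ n) :
    ∑ k ∈ Finset.Icc 1 (n-1), ⌊x + (k : ℚ) / n⌋ = ⌊(n : ℚ) * x⌋ - ⌊x⌋ := by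
  have h := hermite x n (by omega)
  rw [Finset.range_eq_Ico, Finset.sum_eq_sum_Ico_succ_bot (by omega)] at h
  have hIcc : Finset.Icc 1 (n-1) = Finset.Ico 1 n := by
    ext k; simp only [Finset.mem_Icc, Finset.mem_Ico]; omega
  rw [hIcc]
  simp only [Nat.cast_zero, zero_div, add_zero] at h
  linarith

lemma fract_nat_div (a n : ℕ) (hn : 0 < n) :
    Int.fract ((a : ℚ) / n) = ((a % n : ℕ) : ℚ) / n := by
  have hn' : (0:ℚ) < n := by exact_mod_cast hn
  conv_lhs => rw [← Nat.div_add_mod a n]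
  push_cast
  rw [add_div, mul_div_cancel_left₀ _ (ne_of_gt hn'), Int.fract_natCast_add]
  refine Int.fract_eq_self.2 ⟨by positivity, ?_⟩
  rw [div_lt_one hn']
  exact_mod_cast Nat.mod_lt a hn

lemma fract_neg_nat_div (a n : ℕ) (hn : 0 < n) (hnd : ¬ n ∣ a) :
    Int.fract (-((a : ℚ) / n)) = ((n - a % n : ℕ) : ℚ) / n := by
  have hn' : (0:ℚ) < n := by exact_mod_cast hn
  have hm : a % n ≠ 0 := fun h => hnd (Nat.dvd_of_mod_eq_zero h)
  have hmlt : a % n < n := Nat.mod_lt a hn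
  have hne : Int.fract ((a:ℚ)/n) ≠ 0 := by
    rw [fract_nat_div a n hn]
    have : (0:ℚ) < ((a % n : ℕ):ℚ) := by exact_mod_cast Nat.pos_of_ne_zero hm
    positivity
  rw [Int.fract_neg hne, fract_nat_div a n hn]
  rw [Nat.cast_sub (le_of_lt hmlt)]
  field_simp

lemma mod_mem_Icc (n a h : ℕ) (hn : 2 ≤ n) (ha : Nat.Coprime n a)
    (hh : h ∈ Finset.Icc 1 (n-1)) : h * a % n ∈ Finset.Icc 1 (n-1) := by
  simp only [Finset.mem_Icc] at hh ⊢
  have h1 : h * a % n < n := Nat.mod_lt _ (by omega)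
  have h2 : h * a % n ≠ 0 := by
    intro h0
    have hd : n ∣ h * a := Nat.dvd_of_mod_eq_zero h0
    have := Nat.le_of_dvd (by omega) (ha.dvd_of_dvd_mul_right hd)
    omega
  omega

lemma cancel_mod (n a b h : ℕ) (hn : 2 ≤ n) (hb : a * b % n = 1) (hhn : h < n) :
    h * a % n * b % n = h := by
  have h1 : a * b ≡ 1 [MOD n] := by
    show a * b % n = 1 % n
    rw [hb, Nat.mod_eq_of_lt (by omega)]
  have h2 : h * a % n * b ≡ h * (a * b) [MOD n] := by
    calc h * a % n * b ≡ h * a * b [MOD n] := (Nat.mod_modEq (h*a) n).mul_right b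
    _ = h * (a * b) := by ring
  have h3 : h * a % n * b ≡ h [MOD n] := h2.trans (by simpa using Nat.ModEq.mul_left h h1)
  have h4 : h * a % n * b % n = h % n := h3
  rw [h4, Nat.mod_eq_of_lt hhn]

lemma perm_sum {M : Type*} [AddCommMonoid M] (n a : ℕ) (hn : 2 ≤ n) (ha : Nat.Coprime n a)
    (g : ℕ → M) :
    ∑ h ∈ Finset.Icc 1 (n-1), g (h * a % n) = ∑ h ∈ Finset.Icc 1 (n-1), g h := by
  obtain ⟨b, -, hb⟩ := Nat.exists_mul_mod_eq_one_of_coprime ha.symm (by omega)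
  have hab : Nat.Coprime n (a * b) := by
    rw [Nat.Coprime, Nat.gcd_rec, hb]
    exact Nat.gcd_one_left n
  have hbcop : Nat.Coprime n b := Nat.Coprime.coprime_dvd_right (dvd_mul_left b a) hab
  have hba : b * a % n = 1 := by rw [mul_comm]; exact hb
  refine Finset.sum_nbij' (i := fun h => h * a % n) (j := fun h => h * b % n)
    (fun h hh => mod_mem_Icc n a h hn ha hh)
    (fun h hh => mod_mem_Icc n b h hn hbcop hh) ?_ ?_ ?_
  · intro h hh
    simp only [Finset.mem_Icc] at hh
    exact cancel_mod n a b h hn hb (by omega)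
  · intro h hh
    simp only [Finset.mem_Icc] at hh
    exact cancel_mod n b a h hn hba (by omega)
  · intro h hh
    rfl

lemma half_mul_odd_mod (d c : ℕ) (hd : 4 ≤ d) (hde : Even d) (hc : Odd c) :
    d / 2 * c % d = d / 2 := by
  obtain ⟨e, he⟩ := hde
  obtain ⟨f, hf⟩ := hc
  subst he hf
  have h2 : (e + e) / 2 = e := by omega
  rw [h2]
  have : e * (2 * f + 1) = e + (e + e) * f := by ring
  rw [this, Nat.add_mul_mod_self_left, Nat.mod_eq_of_lt (by omega)]

lemma half_unique (d c c' h : ℕ) (hd : 4 ≤ d) (hde : Even d) (hcc' : c * c' % d = 1)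
    (hc'odd : Odd c') (hh1 : 1 ≤ h) (hh2 : h ≤ d - 1) (heq : h * c % d = d / 2) :
    h = d / 2 := by
  have hc := cancel_mod d c c' h (by omega) hcc' (by omega)
  rw [heq, half_mul_odd_mod d c' hd hde hc'odd] at hc
  omega

lemma perm_sum_filtered {M : Type*} [AddCommMonoid M] (d a : ℕ) (hd : 4 ≤ d) (hde : Even d)
    (ha : Nat.Coprime d a) (haodd : Odd a) (g : ℕ → M) :
    ∑ h ∈ (Finset.Icc 1 (d-1)).filter (fun h => h ≠ d/2), g (d - h * a % d)
      = ∑ h ∈ (Finset.Icc 1 (d-1)).filter (fun h => h ≠ d/2), g h := by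
  obtain ⟨b, -, hb⟩ := Nat.exists_mul_mod_eq_one_of_coprime ha.symm (by omega)
  have hab : Nat.Coprime d (a * b) := by
    rw [Nat.Coprime, Nat.gcd_rec, hb]; exact Nat.gcd_one_left d
  have hbcop : Nat.Coprime d b := Nat.Coprime.coprime_dvd_right (dvd_mul_left b a) hab
  have hba : b * a % d = 1 := by rw [mul_comm]; exact hb
  have hbodd : Odd b := by
    have h1 : Odd (a * b) := by
      have h2 := Nat.div_add_mod (a * b) d
      rw [hb] at h2
      rw [← h2]
      exact (hde.mul_right _).add_one
    exact (Nat.odd_mul.mp h1).2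
  refine Finset.sum_nbij' (i := fun h => d - h * a % d) (j := fun h => (d - h) * b % d)
    ?_ ?_ ?_ ?_ ?_
  · intro h hh
    simp only [Finset.mem_filter, Finset.mem_Icc] at hh ⊢
    obtain ⟨⟨hh1, hh2⟩, hh3⟩ := hh
    have hmod := mod_mem_Icc d a h (by omega) ha (by simp only [Finset.mem_Icc]; omega)
    simp only [Finset.mem_Icc] at hmod
    refine ⟨⟨by omega, by omega⟩, ?_⟩
    intro heq
    have h2 : h * a % d = d / 2 := by
      obtain ⟨e, he⟩ := hde
      omega
    exact hh3 (half_unique d a b h hd hde hb hbodd hh1 hh2 h2)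
  · intro h hh
    simp only [Finset.mem_filter, Finset.mem_Icc] at hh ⊢
    obtain ⟨⟨hh1, hh2⟩, hh3⟩ := hh
    have hmod := mod_mem_Icc d b (d - h) (by omega) hbcop (by simp only [Finset.mem_Icc]; omega)
    simp only [Finset.mem_Icc] at hmod
    refine ⟨⟨by omega, by omega⟩, ?_⟩
    intro heq
    have h2 : d - h = d / 2 := half_unique d b a (d - h) hd hde hba haodd (by omega) (by omega) heq
    obtain ⟨e, he⟩ := hde
    omega
  · intro h hh
    simp only [Finset.mem_filter, Finset.mem_Icc] at hh
    obtain ⟨⟨hh1, hh2⟩, hh3⟩ := hh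
    have hmod := mod_mem_Icc d a h (by omega) ha (by simp only [Finset.mem_Icc]; omega)
    simp only [Finset.mem_Icc] at hmod
    show (d - (d - h * a % d)) * b % d = h
    have h2 : d - (d - h * a % d) = h * a % d := by omega
    rw [h2]
    exact cancel_mod d a b h (by omega) hb (by omega)
  · intro h hh
    simp only [Finset.mem_filter, Finset.mem_Icc] at hh
    obtain ⟨⟨hh1, hh2⟩, hh3⟩ := hh
    show d - ((d - h) * b % d) * a % d = h
    have h2 : (d - h) * b % d * a % d = d - h := cancel_mod d b a (d - h) (by omega) hba (by omega)
    rw [h2]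
    omega
  · intro h hh
    rfl

/-- Floor-sum identity (even degree case): for `d ≥ 4` even, `p ∤ d(d-1)`, `q = p^r`,
`1 ≤ m ≤ q-2`, `m ≠ (q-1)/2` and `0 ≤ i ≤ r-1`. -/
theorem stmt8 (p r d q : ℕ) (hp : p.Prime) (hodd : Odd p) (hr : 0 < r)
    (hq : q = p ^ r) (hd : 4 ≤ d) (hde : Even d) (hpd : ¬ p ∣ d * (d - 1))
    (m : ℕ) (hm1 : 1 ≤ m) (hm2 : m ≤ q - 2) (hm3 : m ≠ (q - 1) / 2)
    (i : ℕ) (hi : i ≤ r - 1) :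
    ⌊(-2 * (m : ℚ) * (p : ℚ) ^ i) / ((q : ℚ) - 1)⌋ +
      ⌊((m : ℚ) * d * (p : ℚ) ^ i) / ((q : ℚ) - 1)⌋ +
      ⌊(-(m : ℚ) * ((d : ℚ) - 1) * (p : ℚ) ^ i) / ((q : ℚ) - 1)⌋ -
      ⌊(-(m : ℚ) * (p : ℚ) ^ i) / ((q : ℚ) - 1)⌋ + 1 =
    (∑ h ∈ Finset.Icc 1 (d - 2),
        ⌊Int.fract (((h : ℚ) * (p : ℚ) ^ i) / ((d : ℚ) - 1)) -
          ((m : ℚ) * (p : ℚ) ^ i) / ((q : ℚ) - 1)⌋) +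
      ∑ h ∈ (Finset.Icc 1 (d - 1)).filter (fun h => h ≠ d / 2),
        ⌊Int.fract ((-(h : ℚ) * (p : ℚ) ^ i) / (d : ℚ)) +
          ((m : ℚ) * (p : ℚ) ^ i) / ((q : ℚ) - 1)⌋ := by
  have hp3 : 3 ≤ p := by
    have h2 := hp.two_le
    have hne : p ≠ 2 := by rintro rfl; exact (by norm_num : ¬ Odd 2) hodd
    omega
  have hq3 : 3 ≤ q := by
    have : p ^ 1 ≤ p ^ r := Nat.pow_le_pow_right (by omega) hr
    rw [pow_one] at this
    omega
  set N := q - 1 with hNdef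
  clear_value N
  have hN2 : 2 ≤ N := by omega
  have hqodd : Odd q := hq ▸ hodd.pow
  have hNeven : Even N := by
    rcases hqodd with ⟨t, ht⟩; exact ⟨t, by omega⟩
  have hpodd : Odd (p ^ i) := hodd.pow
  have hpN : ¬ p ∣ N := by
    intro hdvd
    have hpq : p ∣ q := hq ▸ dvd_pow_self p (by omega)
    have h1 : p ∣ q - N := Nat.dvd_sub hpq hdvd
    have h2 : q - N = 1 := by omega
    rw [h2] at h1
    have := Nat.le_of_dvd one_pos h1
    omega
  have hcopN : Nat.Coprime N (p ^ i) := ((hp.coprime_iff_not_dvd.mpr hpN).pow_left i).symm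
  have hpd' : ¬ p ∣ d := fun h => hpd (h.mul_right _)
  have hpd1 : ¬ p ∣ (d - 1) := fun h => hpd (h.mul_left _)
  have hcopd : Nat.Coprime d (p ^ i) := ((hp.coprime_iff_not_dvd.mpr hpd').pow_left i).symm
  have hcopd1 : Nat.Coprime (d - 1) (p ^ i) :=
    ((hp.coprime_iff_not_dvd.mpr hpd1).pow_left i).symm
  have hNQ : ((q : ℚ) - 1) = ((N : ℕ) : ℚ) := by
    have h1 : (N : ℕ) + 1 = q := by omega
    have h2 : ((N : ℕ) : ℚ) + 1 = (q : ℚ) := by exact_mod_cast congrArg (Nat.cast : ℕ → ℚ) h1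
    linarith
  have hdQ : ((d : ℚ) - 1) = ((d - 1 : ℕ) : ℚ) := by
    have h1 : (d - 1 : ℕ) + 1 = d := by omega
    have h2 : ((d - 1 : ℕ) : ℚ) + 1 = (d : ℚ) := by exact_mod_cast congrArg (Nat.cast : ℕ → ℚ) h1
    linarith
  set x : ℚ := ((m : ℚ) * (p : ℚ) ^ i) / ((q : ℚ) - 1) with hx
  -- 2x is not an integer
  have hfract2x : Int.fract (2 * x) ≠ 0 := by
    have h2x : 2 * x = ((2 * m * p ^ i : ℕ) : ℚ) / ((N : ℕ) : ℚ) := by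
      rw [hx, hNQ]; push_cast; ring
    rw [h2x, fract_nat_div _ _ (by omega)]
    have hnd : ¬ N ∣ 2 * m * p ^ i := by
      intro hdvd
      have h1 : N ∣ 2 * m := hcopN.dvd_of_dvd_mul_right hdvd
      obtain ⟨k, hk⟩ := h1
      rcases k with _ | _ | k
      · omega
      · -- 2m = N, so m = (q-1)/2
        have hk' : 2 * m = N * 1 := hk
        apply hm3
        omega
      · have hk' : 2 * m = N * (k + 2) := hk
        have h5 : N * 2 ≤ N * (k + 2) := Nat.mul_le_mul (le_refl N) (by omega)
        omega
    have hm0 : 2 * m * p ^ i % N ≠ 0 := fun h => hnd (Nat.dvd_of_mod_eq_zero h)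
    have hpos : (0 : ℚ) < ((2 * m * p ^ i % N : ℕ) : ℚ) := by
      exact_mod_cast Nat.pos_of_ne_zero hm0
    have hNpos : (0 : ℚ) < ((N : ℕ) : ℚ) := by exact_mod_cast (by omega : 0 < N)
    positivity
  have hA : ⌊-(2 * x)⌋ + ⌊2 * x⌋ = -1 := floor_neg_add _ hfract2x
  have hB : ⌊2 * x⌋ = ⌊x⌋ + ⌊x + 1 / 2⌋ := by
    have h := hermite x 2 (by norm_num)
    rw [Finset.sum_range_succ, Finset.sum_range_one] at h
    norm_num at h
    linarith
  -- first sum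
  have e1 : (∑ h ∈ Finset.Icc 1 (d - 2),
        ⌊Int.fract (((h : ℚ) * (p : ℚ) ^ i) / ((d : ℚ) - 1)) - x⌋)
      = ⌊((d - 1 : ℕ) : ℚ) * (-x)⌋ - ⌊-x⌋ := by
    have hIcc : Finset.Icc 1 (d - 2) = Finset.Icc 1 ((d - 1) - 1) := rfl
    rw [hIcc]
    have estep : ∀ h ∈ Finset.Icc 1 ((d - 1) - 1),
        ⌊Int.fract (((h : ℚ) * (p : ℚ) ^ i) / ((d : ℚ) - 1)) - x⌋
        = (fun k : ℕ => ⌊(-x) + (k : ℚ) / ((d - 1 : ℕ) : ℚ)⌋) (h * p ^ i % (d - 1)) := by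
      intro h hh
      have harg : Int.fract (((h : ℚ) * (p : ℚ) ^ i) / ((d : ℚ) - 1))
          = ((h * p ^ i % (d - 1) : ℕ) : ℚ) / ((d - 1 : ℕ) : ℚ) := by
        rw [hdQ]
        have hcast : (h : ℚ) * (p : ℚ) ^ i = ((h * p ^ i : ℕ) : ℚ) := by push_cast; ring
        rw [hcast, fract_nat_div _ _ (by omega)]
      simp only
      rw [harg, sub_eq_neg_add]
    calc ∑ h ∈ Finset.Icc 1 ((d - 1) - 1),
          ⌊Int.fract (((h : ℚ) * (p : ℚ) ^ i) / ((d : ℚ) - 1)) - x⌋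
        = ∑ h ∈ Finset.Icc 1 ((d - 1) - 1),
            (fun k : ℕ => ⌊(-x) + (k : ℚ) / ((d - 1 : ℕ) : ℚ)⌋) (h * p ^ i % (d - 1)) :=
          Finset.sum_congr rfl estep
      _ = ∑ h ∈ Finset.Icc 1 ((d - 1) - 1),
            (fun k : ℕ => ⌊(-x) + (k : ℚ) / ((d - 1 : ℕ) : ℚ)⌋) h :=
          perm_sum (d - 1) (p ^ i) (by omega) hcopd1 (fun k : ℕ => ⌊(-x) + (k : ℚ) / ((d - 1 : ℕ) : ℚ)⌋)
      _ = ⌊((d - 1 : ℕ) : ℚ) * (-x)⌋ - ⌊-x⌋ := hermite_Icc (-x) (d - 1) (by omega)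
  -- second sum
  have e2 : (∑ h ∈ (Finset.Icc 1 (d - 1)).filter (fun h => h ≠ d / 2),
        ⌊Int.fract ((-(h : ℚ) * (p : ℚ) ^ i) / (d : ℚ)) + x⌋)
      = ⌊(d : ℚ) * x⌋ - ⌊x⌋ - ⌊x + 1 / 2⌋ := by
    have estep : ∀ h ∈ (Finset.Icc 1 (d - 1)).filter (fun h => h ≠ d / 2),
        ⌊Int.fract ((-(h : ℚ) * (p : ℚ) ^ i) / (d : ℚ)) + x⌋
        = (fun k : ℕ => ⌊(k : ℚ) / (d : ℚ) + x⌋) (d - h * p ^ i % d) := by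
      intro h hh
      simp only [Finset.mem_filter, Finset.mem_Icc] at hh
      simp only
      congr 1
      have hnd : ¬ (d ∣ h * p ^ i) := by
        intro hdvd
        have := Nat.le_of_dvd (by omega) (hcopd.dvd_of_dvd_mul_right hdvd)
        omega
      have hcast : (-(h : ℚ) * (p : ℚ) ^ i) / (d : ℚ) = -(((h * p ^ i : ℕ) : ℚ) / (d : ℚ)) := by
        push_cast; ring
      rw [hcast, fract_neg_nat_div _ _ (by omega) hnd]
    have hstep2 : (∑ h ∈ (Finset.Icc 1 (d - 1)).filter (fun h => h ≠ d / 2),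
          ⌊Int.fract ((-(h : ℚ) * (p : ℚ) ^ i) / (d : ℚ)) + x⌋)
        = ∑ h ∈ (Finset.Icc 1 (d - 1)).filter (fun h => h ≠ d / 2),
            (fun k : ℕ => ⌊(k : ℚ) / (d : ℚ) + x⌋) h :=
      (Finset.sum_congr rfl estep).trans (perm_sum_filtered d (p ^ i) hd hde hcopd hpodd (fun k : ℕ => ⌊(k : ℚ) / (d : ℚ) + x⌋))
    rw [hstep2, Finset.filter_ne']
    have hmem : d / 2 ∈ Finset.Icc 1 (d - 1) := by simp only [Finset.mem_Icc]; omega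
    have hkey := Finset.sum_erase_add (Finset.Icc 1 (d - 1))
      (fun k : ℕ => ⌊(k : ℚ) / (d : ℚ) + x⌋) hmem
    have hIcc2 : ∑ h ∈ Finset.Icc 1 (d - 1), ⌊(h : ℚ) / (d : ℚ) + x⌋ = ⌊(d : ℚ) * x⌋ - ⌊x⌋ := by
      have h3 := hermite_Icc x d (by omega)
      calc ∑ h ∈ Finset.Icc 1 (d - 1), ⌊(h : ℚ) / (d : ℚ) + x⌋
          = ∑ h ∈ Finset.Icc 1 (d - 1), ⌊x + (h : ℚ) / (d : ℚ)⌋ := by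
            apply Finset.sum_congr rfl; intro h _; rw [add_comm]
      _ = _ := h3
    have hhalf : ((d / 2 : ℕ) : ℚ) / (d : ℚ) = 1 / 2 := by
      have hc : ((d / 2 : ℕ) : ℚ) ≠ 0 := Nat.cast_ne_zero.mpr (by omega)
      have hdd : (d : ℚ) = 2 * ((d / 2 : ℕ) : ℚ) := by
        exact_mod_cast congrArg (Nat.cast : ℕ → ℚ) (show d = 2 * (d / 2) by obtain ⟨e, he⟩ := hde; omega)
      rw [hdd]
      field_simp
    rw [hhalf] at hkey
    have hcomm : ⌊(1 : ℚ) / 2 + x⌋ = ⌊x + 1 / 2⌋ := by rw [add_comm]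
    rw [hcomm] at hkey
    linarith [hkey, hIcc2]
  -- rewrite LHS floor arguments
  have l1 : (-2 * (m : ℚ) * (p : ℚ) ^ i) / ((q : ℚ) - 1) = -(2 * x) := by rw [hx]; ring
  have l2 : ((m : ℚ) * d * (p : ℚ) ^ i) / ((q : ℚ) - 1) = (d : ℚ) * x := by rw [hx]; ring
  have l3 : (-(m : ℚ) * ((d : ℚ) - 1) * (p : ℚ) ^ i) / ((q : ℚ) - 1)
      = ((d - 1 : ℕ) : ℚ) * (-x) := by rw [hx, ← hdQ]; ring
  have l4 : (-(m : ℚ) * (p : ℚ) ^ i) / ((q : ℚ) - 1) = -x := by rw [hx]; ring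
  rw [l1, l2, l3, l4, e1, e2]
  linarith [hA, hB]
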